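/- In any metabelian Novikov algebra A, for all a,b,c,d,e in A, the element a*(b*(c*(d*e))) equals 0. -/
import Mathlib


/-- Setting: a nonassociative (nonunital) algebra over a field of characteristic 0. -/
theorem stmt_0 {K : Type*} [Field K] [CharZero K]
    {A : Type*} [NonUnitalNonAssocRing A] [Module K A]
    [SMulCommClass K A A] [IsScalarTower K A A]
    (lcom : ∀ a b c : A, a*(b*c) = b*(a*c))
    (rsym : ∀ a b c : A, (a*b)*c - a*(b*c) = (a*c)*b - a*(c*b))
    (metab : ∀ a b c d : A, (a*b)*(c*d) = 0) :
    ∀ a b c d e : A, a*(b*(c*(d*e))) = 0 := by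
  intro a b c d e
  have h0 : ((a*((b*e)*(c*d)))) = (0:A) := by rw [metab b e c d]; simp
  have h1 : ((a*(b*(c*(d*e)))) - (a*(b*(d*(c*e))))) = (0:A) := by rw [lcom c d e]; exact sub_self _
  have h2 : ((a*(b*((d*c)*e))) - (a*(b*(d*(c*e)))) - ((a*(b*((d*e)*c))) - (a*(b*(d*(e*c)))))) = (0:A) := by simp only [← mul_sub]; rw [rsym d c e]; simp
  have h3 : ((a*(b*(e*(d*c)))) - (a*(e*(b*(d*c))))) = (0:A) := by rw [lcom b e (d*c)]; exact sub_self _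
  have h4 : ((a*((b*d)*(e*c))) - (a*(e*((b*d)*c)))) = (0:A) := by rw [lcom (b*d) e c]; exact sub_self _
  have h5 : ((a*((b*c)*(e*d))) - (a*(e*((b*c)*d)))) = (0:A) := by rw [lcom (b*c) e d]; exact sub_self _
  have h6 : ((a*(e*((b*c)*d))) - (a*(e*(b*(c*d)))) - ((a*(e*((b*d)*c))) - (a*(e*(b*(d*c)))))) = (0:A) := by simp only [← mul_sub]; rw [rsym b c d]; simp
  have h7 : ((a*((b*d)*(e*c)))) = (0:A) := by rw [metab b d e c]; simp
  have h8 : ((a*(b*(d*(e*c)))) - (a*(b*(e*(d*c))))) = (0:A) := by rw [lcom d e c]; exact sub_self _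
  have h9 : ((a*((b*c)*(e*d)))) = (0:A) := by rw [metab b c e d]; simp
  have h10 : ((a*((b*d)*(c*e)))) = (0:A) := by rw [metab b d c e]; simp
  have h11 : ((a*(b*((d*c)*e))) - (a*((d*c)*(b*e)))) = (0:A) := by rw [lcom b (d*c) e]; exact sub_self _
  have h12 : ((a*((d*c)*(b*e)))) = (0:A) := by rw [metab d c b e]; simp
  have h13 : ((a*(b*(e*(c*d)))) - (a*(e*(b*(c*d))))) = (0:A) := by rw [lcom b e (c*d)]; exact sub_self _
  have h14 : ((a*(b*(c*(e*d)))) - (a*(b*(e*(c*d))))) = (0:A) := by rw [lcom c e d]; exact sub_self _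
  have h15 : (((a*(b*c))*(d*e)) - (a*((b*c)*(d*e))) - (((a*(d*e))*(b*c)) - (a*((d*e)*(b*c))))) = (0:A) := sub_eq_zero_of_eq (rsym a (b*c) (d*e))
  have h16 : ((a*(b*((d*e)*c))) - (a*((d*e)*(b*c)))) = (0:A) := by rw [lcom b (d*e) c]; exact sub_self _
  have h17 : ((a*(b*(c*(d*e)))) - (a*(c*(b*(d*e))))) = (0:A) := by rw [lcom b c (d*e)]; exact sub_self _
  have h18 : ((b*((a*d)*(c*e)))) = (0:A) := by rw [metab a d c e]; simp
  have h19 : ((a*(b*(c*(e*d)))) - (a*(c*(b*(e*d))))) = (0:A) := by rw [lcom b c (e*d)]; exact sub_self _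
  have h20 : ((a*((b*e)*(c*d))) - (a*(c*((b*e)*d)))) = (0:A) := by rw [lcom (b*e) c d]; exact sub_self _
  have h21 : ((a*((b*d)*(c*e))) - (a*(c*((b*d)*e)))) = (0:A) := by rw [lcom (b*d) c e]; exact sub_self _
  have h22 : ((a*(c*((b*d)*e))) - (a*(c*(b*(d*e)))) - ((a*(c*((b*e)*d))) - (a*(c*(b*(e*d)))))) = (0:A) := by simp only [← mul_sub]; rw [rsym b d e]; simp
  have h23 : ((b*((a*e)*(c*d)))) = (0:A) := by rw [metab a e c d]; simp
  have h24 : ((b*(a*(c*(d*e)))) - (b*(a*(d*(c*e))))) = (0:A) := by rw [lcom c d e]; exact sub_self _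
  have h25 : ((b*(a*(c*(e*d)))) - (b*(c*(a*(e*d))))) = (0:A) := by rw [lcom a c (e*d)]; exact sub_self _
  have h26 : ((b*((a*e)*(c*d))) - (b*(c*((a*e)*d)))) = (0:A) := by rw [lcom (a*e) c d]; exact sub_self _
  have h27 : ((b*((a*d)*(c*e))) - (b*(c*((a*d)*e)))) = (0:A) := by rw [lcom (a*d) c e]; exact sub_self _
  have h28 : ((b*(c*((a*d)*e))) - (b*(c*(a*(d*e)))) - ((b*(c*((a*e)*d))) - (b*(c*(a*(e*d)))))) = (0:A) := by simp only [← mul_sub]; rw [rsym a d e]; simp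
  have h29 : ((a*(b*(c*(d*e)))) - (b*(a*(c*(d*e))))) = (0:A) := sub_eq_zero_of_eq (lcom a b (c*(d*e)))
  have h30 : ((b*(a*(c*(d*e)))) - (b*(c*(a*(d*e))))) = (0:A) := by rw [lcom a c (d*e)]; exact sub_self _
  have h31 : (((a*(d*e))*(b*c)) - (b*((a*(d*e))*c))) = (0:A) := sub_eq_zero_of_eq (lcom (a*(d*e)) b c)
  have h32 : ((b*((a*c)*(d*e))) - (b*(a*(c*(d*e)))) - ((b*((a*(d*e))*c)) - (b*(a*((d*e)*c))))) = (0:A) := by simp only [← mul_sub]; rw [rsym a c (d*e)]; simp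
  have h33 : ((b*(a*(d*(e*c)))) - (b*(a*(e*(d*c))))) = (0:A) := by rw [lcom d e c]; exact sub_self _
  have h34 : ((b*(a*(c*(e*d)))) - (b*(a*(e*(c*d))))) = (0:A) := by rw [lcom c e d]; exact sub_self _
  have h35 : ((b*(a*((d*c)*e))) - (b*(a*(d*(c*e)))) - ((b*(a*((d*e)*c))) - (b*(a*(d*(e*c)))))) = (0:A) := by simp only [← mul_sub]; rw [rsym d c e]; simp
  have h36 : ((b*(a*((d*c)*e))) - (b*((d*c)*(a*e)))) = (0:A) := by rw [lcom a (d*c) e]; exact sub_self _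
  have h37 : ((b*((d*c)*(a*e)))) = (0:A) := by rw [metab d c a e]; simp
  have h38 : ((b*(a*(e*(d*c)))) - (b*(e*(a*(d*c))))) = (0:A) := by rw [lcom a e (d*c)]; exact sub_self _
  have h39 : ((b*((a*d)*(e*c))) - (b*(e*((a*d)*c)))) = (0:A) := by rw [lcom (a*d) e c]; exact sub_self _
  have h40 : ((b*((a*c)*(e*d))) - (b*(e*((a*c)*d)))) = (0:A) := by rw [lcom (a*c) e d]; exact sub_self _
  have h41 : ((b*(e*((a*c)*d))) - (b*(e*(a*(c*d)))) - ((b*(e*((a*d)*c))) - (b*(e*(a*(d*c)))))) = (0:A) := by simp only [← mul_sub]; rw [rsym a c d]; simp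
  have h42 : ((b*((a*d)*(e*c)))) = (0:A) := by rw [metab a d e c]; simp
  have h43 : ((b*((a*c)*(e*d)))) = (0:A) := by rw [metab a c e d]; simp
  have h44 : ((a*((b*c)*(d*e)))) = (0:A) := by rw [metab b c d e]; simp
  have h45 : (((a*(b*c))*(d*e))) = (0:A) := metab a (b*c) d e
  have h46 : ((b*((a*c)*(d*e)))) = (0:A) := by rw [metab a c d e]; simp
  have h47 : ((b*(a*(e*(c*d)))) - (b*(e*(a*(c*d))))) = (0:A) := by rw [lcom a e (c*d)]; exact sub_self _
  linear_combination (norm := abel1) -h0 - h1 + h2 - h3 + h4 - h5 - h6 - h7 - h8 + h9 + h10 - h11 - h12 + h13 + h14 + h15 + h16 + h17 - h18 - h19 + h20 - h21 - h22 + h23 + h24 + h25 - h26 + h27 + h28 + h29 - h30 + h31 - h32 + h33 - h34 - h35 + h36 + h37 + h38 - h39 + h40 + h41 + h42 - h43 + h44 - h45 + h46 - h47
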